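/- The set of tropical Fermat-Weber points of the three points (0,0,0), (0,3,1), (0,2,5) in R^3 / R·1 is exactly the triangle with vertices (0,1,1), (0,2,1), (0,2,2); equivalently, a point u with u_1 = 0 is a Fermat-Weber point of these three points if and only if (u_2, u_3) is in the convex hull of {(1,1),(2,1),(2,2)}. -/

import Mathlib

noncomputable def dtr {n : ℕ} [NeZero n] (u v : Fin n → ℝ) : ℝ :=
  Finset.univ.sup' Finset.univ_nonempty
    (fun p : Fin n × Fin n => |u p.1 - u p.2 - v p.1 + v p.2|)

lemma le_dtr {n : ℕ} [NeZero n] (u v : Fin n → ℝ) (p : Fin n × Fin n) :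
    |u p.1 - u p.2 - v p.1 + v p.2| ≤ dtr u v :=
  Finset.le_sup' (fun p : Fin n × Fin n => |u p.1 - u p.2 - v p.1 + v p.2|)
    (Finset.mem_univ p)

lemma dtr_le {n : ℕ} [NeZero n] {u v : Fin n → ℝ} {c : ℝ}
    (h : ∀ p : Fin n × Fin n, |u p.1 - u p.2 - v p.1 + v p.2| ≤ c) : dtr u v ≤ c :=
  Finset.sup'_le _ _ fun p _ => h p

lemma ub1 (u : Fin 3 → ℝ) (h0 : u 0 = 0) (h1 : 1 ≤ u 2) (h2 : u 2 ≤ u 1) (h3 : u 1 ≤ 2) :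
    dtr u ![0, 0, 0] ≤ u 1 := by
  apply dtr_le
  rintro ⟨i, j⟩
  fin_cases i <;> fin_cases j <;> simp [h0] <;>
    first
      | linarith
      | (rw [abs_le]; constructor <;> linarith)

lemma ub2 (u : Fin 3 → ℝ) (h0 : u 0 = 0) (h1 : 1 ≤ u 2) (h2 : u 2 ≤ u 1) (h3 : u 1 ≤ 2) :
    dtr u ![0, 3, 1] ≤ 2 - u 1 + u 2 := by
  apply dtr_le
  rintro ⟨i, j⟩
  fin_cases i <;> fin_cases j <;> simp [h0] <;>
    first
      | linarith
      | (rw [abs_le]; constructor <;> linarith)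

lemma ub3 (u : Fin 3 → ℝ) (h0 : u 0 = 0) (h1 : 1 ≤ u 2) (h2 : u 2 ≤ u 1) (h3 : u 1 ≤ 2) :
    dtr u ![0, 2, 5] ≤ 5 - u 2 := by
  apply dtr_le
  rintro ⟨i, j⟩
  fin_cases i <;> fin_cases j <;> simp [h0] <;>
    first
      | linarith
      | (rw [abs_le]; constructor <;> linarith)

lemma lb (w : Fin 3 → ℝ) :
    7 ≤ dtr w ![0, 0, 0] + dtr w ![0, 3, 1] + dtr w ![0, 2, 5] := by
  have A := le_dtr w ![0, 0, 0] (1, 0)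
  have B := le_dtr w ![0, 3, 1] (1, 2)
  have C := le_dtr w ![0, 2, 5] (2, 0)
  simp only [Matrix.cons_val_zero, Matrix.cons_val_one, Matrix.head_cons,
    Matrix.cons_val_two, Matrix.tail_cons] at A B C
  have a1 : w 1 - w 0 - 0 + 0 ≤ |w 1 - w 0 - 0 + 0| := le_abs_self _
  have b1 : -(w 1 - w 2 - 3 + 1) ≤ |w 1 - w 2 - 3 + 1| := neg_le_abs _
  have c1 : -(w 2 - w 0 - 5 + 0) ≤ |w 2 - w 0 - 5 + 0| := neg_le_abs _
  linarith

lemma tri_iff (x y : ℝ) :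
    (x, y) ∈ convexHull ℝ ({(1, 1), (2, 1), (2, 2)} : Set (ℝ × ℝ)) ↔
      1 ≤ y ∧ y ≤ x ∧ x ≤ 2 := by
  constructor
  · intro h
    have hconv : Convex ℝ {p : ℝ × ℝ | 1 ≤ p.2 ∧ p.2 ≤ p.1 ∧ p.1 ≤ 2} := by
      rintro p ⟨hp1, hp2, hp3⟩ q ⟨hq1, hq2, hq3⟩ a b ha hb hab
      refine ⟨?_, ?_, ?_⟩ <;> simp only [Prod.fst_add, Prod.snd_add, Prod.smul_fst,
        Prod.smul_snd, smul_eq_mul] <;> nlinarith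
    have hsub : convexHull ℝ ({(1, 1), (2, 1), (2, 2)} : Set (ℝ × ℝ)) ⊆
        {p : ℝ × ℝ | 1 ≤ p.2 ∧ p.2 ≤ p.1 ∧ p.1 ≤ 2} := by
      apply convexHull_min _ hconv
      rintro p (rfl | rfl | rfl) <;> norm_num
    exact hsub h
  · rintro ⟨h1, h2, h3⟩
    have key : (Finset.univ : Finset (Fin 3)).centerMass ![2 - x, x - y, y - 1]
        (![(1, 1), (2, 1), (2, 2)] : Fin 3 → ℝ × ℝ) ∈
        convexHull ℝ ({(1, 1), (2, 1), (2, 2)} : Set (ℝ × ℝ)) := by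
      apply Finset.centerMass_mem_convexHull
      · intro i _; fin_cases i <;> simp <;> linarith
      · norm_num [Fin.sum_univ_three]
        change (0:ℝ) < 2 - y + (y - 1); linarith
      · intro i _; fin_cases i <;> simp
    convert key using 1
    simp [Finset.centerMass, Fin.sum_univ_three, Prod.ext_iff]
    norm_num
    constructor <;> ring

theorem stmt10 (u : Fin 3 → ℝ) (h0 : u 0 = 0) :
    (∀ w : Fin 3 → ℝ,
        dtr u ![0, 0, 0] + dtr u ![0, 3, 1] + dtr u ![0, 2, 5] ≤
          dtr w ![0, 0, 0] + dtr w ![0, 3, 1] + dtr w ![0, 2, 5]) ↔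
      (u 1, u 2) ∈
        convexHull ℝ ({(1, 1), (2, 1), (2, 2)} : Set (ℝ × ℝ)) := by
  rw [tri_iff]
  constructor
  · intro h
    have h7 : dtr u ![0, 0, 0] + dtr u ![0, 3, 1] + dtr u ![0, 2, 5] ≤ 7 := by
      have hw := h ![0, 2, 1]
      have e0 : (![0, 2, 1] : Fin 3 → ℝ) 0 = 0 := by norm_num
      have e1 : (![0, 2, 1] : Fin 3 → ℝ) 1 = 2 := by norm_num
      have e2 : (![0, 2, 1] : Fin 3 → ℝ) 2 = 1 := by rfl
      have u1 := ub1 ![0, 2, 1] e0 (by rw [e2]) (by rw [e2]; norm_num) (by norm_num)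
      have u2 := ub2 ![0, 2, 1] e0 (by rw [e2]) (by rw [e2]; norm_num) (by norm_num)
      have u3 := ub3 ![0, 2, 1] e0 (by rw [e2]) (by rw [e2]; norm_num) (by norm_num)
      rw [e1] at u1 u2
      rw [e2] at u2 u3
      linarith
    have A1 := le_dtr u ![0, 0, 0] (1, 0)
    have A2 := le_dtr u ![0, 0, 0] (2, 0)
    have B1 := le_dtr u ![0, 3, 1] (1, 0)
    have B2 := le_dtr u ![0, 3, 1] (1, 2)
    have C1 := le_dtr u ![0, 2, 5] (2, 0)
    have C2 := le_dtr u ![0, 2, 5] (1, 2)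
    simp only [Matrix.cons_val_zero, Matrix.cons_val_one, Matrix.head_cons,
      Matrix.cons_val_two, Matrix.tail_cons] at A1 A2 B1 B2 C1 C2
    have a1 : u 1 - u 0 - 0 + 0 ≤ |u 1 - u 0 - 0 + 0| := le_abs_self _
    have a2 : u 2 - u 0 - 0 + 0 ≤ |u 2 - u 0 - 0 + 0| := le_abs_self _
    have b1 : -(u 1 - u 0 - 3 + 0) ≤ |u 1 - u 0 - 3 + 0| := neg_le_abs _
    have b2 : -(u 1 - u 2 - 3 + 1) ≤ |u 1 - u 2 - 3 + 1| := neg_le_abs _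
    have c1 : -(u 2 - u 0 - 5 + 0) ≤ |u 2 - u 0 - 5 + 0| := neg_le_abs _
    have c2 : u 1 - u 2 - 2 + 5 ≤ |u 1 - u 2 - 2 + 5| := le_abs_self _
    refine ⟨by linarith, by linarith, by linarith⟩
  · rintro ⟨h1, h2, h3⟩
    intro w
    have u1 := ub1 u h0 h1 h2 h3
    have u2 := ub2 u h0 h1 h2 h3
    have u3 := ub3 u h0 h1 h2 h3
    have := lb w
    linarith
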